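/- arXiv:1111.0287 — 4 statements merged into one kernel-verified Lean document; each statement's English description precedes it below -/
import Mathlib

section
/- Let G be a group, f : G → ℝ subadditive, and μ its homogenization. Let T ⊆ G be a subset closed under conjugation (ψτψ^{−1} ∈ T for all τ ∈ T, ψ ∈ G), and let e₀ ≥ 0 be such that |f(τ)| ≤ e₀ and |f(τ^{−1})| ≤ e₀ for every τ ∈ T. If φ ∈ G can be written as a product φ = τ₁τ₂⋯τ_m of m elements of T, then |μ(φψ) − μ(ψ)| ≤ m·e₀ for every ψ ∈ G; in particular |μ(φ)| ≤ m·e₀. -/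
section Aux

variable {G : Type*} [Group G] (f : G → ℝ)

lemma aux_prod_le (hf : ∀ φ ψ : G, f (φ * ψ) ≤ f φ + f ψ) (e₀ : ℝ) :
    ∀ l : List G, l ≠ [] → (∀ x ∈ l, f x ≤ e₀) → f l.prod ≤ l.length * e₀ := by
  intro l
  induction l with
  | nil => simp
  | cons a t ih =>
    intro _ hb
    rcases eq_or_ne t [] with rfl | ht
    · simpa using hb a (by simp)
    · have h1 : f a ≤ e₀ := hb a (by simp)
      have h2 : f t.prod ≤ t.length * e₀ := ih ht (fun x hx => hb x (by simp [hx]))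
      have := hf a t.prod
      simp only [List.prod_cons, List.length_cons]
      push_cast
      nlinarith

lemma aux_mu_one (hμ1 : Filter.Tendsto (fun k : ℕ => f ((1 : G) ^ k) / (k : ℝ))
    Filter.atTop (nhds (μ1 : ℝ))) : μ1 = 0 := by
  have h : Filter.Tendsto (fun k : ℕ => f ((1 : G) ^ k) / (k : ℝ)) Filter.atTop (nhds 0) := by
    simp only [one_pow]
    exact tendsto_const_div_atTop_nhds_zero_nat (f 1)
  exact tendsto_nhds_unique hμ1 h

/-- Key estimate: if all conjugates `ψ^j φ ψ^{-j}` have `f`-value at most `C`,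
then `μ (φ * ψ) ≤ C + μ ψ`. -/
lemma aux_key (hf : ∀ φ ψ : G, f (φ * ψ) ≤ f φ + f ψ) (μ : G → ℝ)
    (hμ : ∀ φ : G,
      Filter.Tendsto (fun k : ℕ => f (φ ^ k) / (k : ℝ)) Filter.atTop (nhds (μ φ)))
    (φ ψ : G) (C : ℝ) (hC : ∀ j : ℕ, f (ψ ^ j * φ * (ψ ^ j)⁻¹) ≤ C) :
    μ (φ * ψ) ≤ C + μ ψ := by
  have hstep : ∀ k : ℕ, ∀ x : G, f ((φ * ψ) ^ k * (ψ ^ k)⁻¹ * x) ≤ k * C + f x := by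
    intro k
    induction k with
    | zero => intro x; simp
    | succ k ih =>
      intro x
      have hid : (φ * ψ) ^ (k + 1) * (ψ ^ (k + 1))⁻¹ * x
          = (φ * ψ) ^ k * (ψ ^ k)⁻¹ * (ψ ^ k * φ * (ψ ^ k)⁻¹ * x) := by
        rw [pow_succ, pow_succ]
        group
      rw [hid]
      have h1 := ih (ψ ^ k * φ * (ψ ^ k)⁻¹ * x)
      have h2 := hf (ψ ^ k * φ * (ψ ^ k)⁻¹) x
      have h3 := hC k
      push_cast
      linarith
  have hbound : ∀ k : ℕ, f ((φ * ψ) ^ k) ≤ k * C + f (ψ ^ k) := by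
    intro k
    have := hstep k (ψ ^ k)
    simpa using this
  have h2 : Filter.Tendsto (fun k : ℕ => C + f (ψ ^ k) / (k : ℝ)) Filter.atTop
      (nhds (C + μ ψ)) := tendsto_const_nhds.add (hμ ψ)
  refine le_of_tendsto_of_tendsto (hμ (φ * ψ)) h2 ?_
  filter_upwards [Filter.eventually_gt_atTop 0] with k hk
  have hk' : (0 : ℝ) < (k : ℝ) := by exact_mod_cast hk
  have := hbound k
  rw [div_le_iff₀ hk'] at *
  calc f ((φ * ψ) ^ k) ≤ k * C + f (ψ ^ k) := hbound k
    _ ≤ (C + f (ψ ^ k) / (k : ℝ)) * (k : ℝ) := by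
        rw [add_mul, div_mul_cancel₀ _ hk'.ne']
        ring_nf
        linarith

end Aux

/-- Let `G` be a group, `f : G → ℝ` subadditive, and `μ` its
homogenization. Let `T ⊆ G` be a subset closed under conjugation and `e₀ ≥ 0` be such
that `|f τ| ≤ e₀` and `|f τ⁻¹| ≤ e₀` for every `τ ∈ T`. If `φ` can be written as a
product of `m` elements of `T`, then `|μ (φ * ψ) - μ ψ| ≤ m * e₀` for every `ψ : G`;
in particular `|μ φ| ≤ m * e₀`. -/
theorem homogenization_fragmentation_estimate {G : Type*} [Group G] (f : G → ℝ)
    (hf : ∀ φ ψ : G, f (φ * ψ) ≤ f φ + f ψ)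
    (μ : G → ℝ)
    (hμ : ∀ φ : G,
      Filter.Tendsto (fun k : ℕ => f (φ ^ k) / (k : ℝ)) Filter.atTop (nhds (μ φ)))
    (T : Set G) (hT : ∀ τ ∈ T, ∀ ψ : G, ψ * τ * ψ⁻¹ ∈ T)
    (e₀ : ℝ) (he₀ : 0 ≤ e₀)
    (hTf : ∀ τ ∈ T, |f τ| ≤ e₀ ∧ |f τ⁻¹| ≤ e₀)
    (φ : G) (m : ℕ) (L : List G) (hLm : L.length = m) (hLT : ∀ τ ∈ L, τ ∈ T)
    (hφ : φ = L.prod) :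
    (∀ ψ : G, |μ (φ * ψ) - μ ψ| ≤ (m : ℝ) * e₀) ∧ |μ φ| ≤ (m : ℝ) * e₀ := by
  have hμ1 : μ 1 = 0 := aux_mu_one f (hμ 1)
  have main : ∀ ψ : G, |μ (φ * ψ) - μ ψ| ≤ (m : ℝ) * e₀ := by
    intro ψ
    rcases Nat.eq_zero_or_pos m with rfl | hm
    · have hL : L = [] := List.length_eq_zero_iff.mp hLm
      subst hL
      simp only [List.prod_nil] at hφ
      subst hφ
      simp
    · have hLne : L ≠ [] := by
        intro h; subst h; simp at hLm; omega
      -- f of any conjugate of φ is ≤ m * e₀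
      have hCφ : ∀ g : G, f (g * φ * g⁻¹) ≤ (m : ℝ) * e₀ := by
        intro g
        have heq : g * φ * g⁻¹ = (L.map (fun τ => g * τ * g⁻¹)).prod := by
          rw [hφ]
          have := map_list_prod (MulAut.conj g).toMonoidHom L
          simpa [MulAut.conj] using this
        rw [heq]
        have := aux_prod_le f hf e₀ (L.map (fun τ => g * τ * g⁻¹))
          (by simp [hLne]) ?_
        · simpa [hLm] using this
        · intro x hx
          simp only [List.mem_map] at hx
          obtain ⟨τ, hτ, rfl⟩ := hx
          exact le_trans (le_abs_self _) (hTf _ (hT τ (hLT τ hτ) g)).1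
      -- f of any conjugate of φ⁻¹ is ≤ m * e₀
      have hCφ' : ∀ g : G, f (g * φ⁻¹ * g⁻¹) ≤ (m : ℝ) * e₀ := by
        intro g
        have heq1 : (L.map (fun τ => g * τ * g⁻¹)).prod = g * L.prod * g⁻¹ := by
          have := map_list_prod (MulAut.conj g).toMonoidHom L
          simpa [MulAut.conj] using this.symm
        have heq : g * φ⁻¹ * g⁻¹ = ((L.reverse.map (fun τ => (g * τ * g⁻¹)⁻¹))).prod := by
          have hl : L.reverse.map (fun τ => (g * τ * g⁻¹)⁻¹)
              = ((L.map (fun τ => g * τ * g⁻¹)).map (fun x => x⁻¹)).reverse := by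
            simp [List.map_map, List.map_reverse]
          rw [hl, ← List.prod_inv_reverse, heq1, hφ]
          group
        rw [heq]
        have := aux_prod_le f hf e₀ (L.reverse.map (fun τ => (g * τ * g⁻¹)⁻¹))
          (by simp [hLne]) ?_
        · simpa [hLm] using this
        · intro x hx
          simp only [List.mem_map, List.mem_reverse] at hx
          obtain ⟨τ, hτ, rfl⟩ := hx
          exact le_trans (le_abs_self _) (hTf _ (hT τ (hLT τ hτ) g)).2
      have h1 : μ (φ * ψ) ≤ (m : ℝ) * e₀ + μ ψ :=
        aux_key f hf μ hμ φ ψ _ (fun j => hCφ (ψ ^ j))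
      have h2 : μ ψ ≤ (m : ℝ) * e₀ + μ (φ * ψ) := by
        have := aux_key f hf μ hμ φ⁻¹ (φ * ψ) ((m : ℝ) * e₀)
          (fun j => hCφ' ((φ * ψ) ^ j))
        simpa using this
      rw [abs_sub_le_iff]
      constructor <;> linarith
  refine ⟨main, ?_⟩
  have := main 1
  simpa [hμ1] using this
end

section
/- Let M be a locally compact Hausdorff topological space and let C_c(M) denote the space of compactly supported continuous real-valued functions on M. Let ζ : C_c(M) → ℝ satisfy: (a) ζ(f) − ζ(g) ≤ sup_{x∈M}(f(x) − g(x)) for all f, g ∈ C_c(M); (b) ζ(f) + ζ(−f) ≥ 0 for all f ∈ C_c(M). Call a compact subset X ⊆ M ζ-superheavy if ζ(f) = c for every f ∈ C_c(M) and c ∈ ℝ with f(x) = c for all x ∈ X. Then a nonempty compact subset X ⊆ M is ζ-superheavy if and only if ζ(f) ≤ max_{x∈X} f(x) for every f ∈ C_c(M). -/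
open CompactlySupported

/-- Let `M` be a locally compact Hausdorff topological space and
`C_c(M, ℝ)` the space of compactly supported continuous real-valued functions on `M`.
Let `ζ : C_c(M, ℝ) → ℝ` satisfy: (a) `ζ f - ζ g ≤ sup_{x ∈ M} (f x - g x)` for all
`f g`; (b) `ζ f + ζ (-f) ≥ 0` for all `f`. Call a compact subset `X ⊆ M` superheavy if
`ζ f = c` whenever `f` is constantly equal to `c` on `X`. Then a nonempty compact
`X ⊆ M` is superheavy iff `ζ f ≤ max_{x ∈ X} f x` for every `f`. -/
theorem superheavy_iff_le_max
    {M : Type*} [TopologicalSpace M] [LocallyCompactSpace M] [T2Space M]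
    (ζ : C_c(M, ℝ) → ℝ)
    (ha : ∀ f g : C_c(M, ℝ), ζ f - ζ g ≤ ⨆ x : M, (f x - g x))
    (hb : ∀ f : C_c(M, ℝ), 0 ≤ ζ f + ζ (-f))
    (X : Set M) (hX : IsCompact X) (hXne : X.Nonempty) :
    (∀ (f : C_c(M, ℝ)) (c : ℝ), (∀ x ∈ X, f x = c) → ζ f = c) ↔
      (∀ f : C_c(M, ℝ), ζ f ≤ ⨆ x : X, f (x : M)) := by
  have hMne : Nonempty M := ⟨hXne.choose⟩
  have hXty : Nonempty X := ⟨⟨hXne.choose, hXne.choose_spec⟩⟩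
  constructor
  · intro hsh f
    -- the max of f on X
    obtain ⟨x0, hx0X, hx0⟩ := hX.exists_isMaxOn hXne f.continuous.continuousOn
    set m : ℝ := f x0 with hm
    have hbdd : BddAbove (Set.range fun x : X => f (x : M)) :=
      ⟨m, by rintro _ ⟨x, rfl⟩; exact hx0 x.2⟩
    have hle : m ≤ ⨆ x : X, f (x : M) := le_ciSup hbdd (⟨x0, hx0X⟩ : X)
    refine le_trans ?_ hle
    -- show ζ f ≤ m + ε for every ε > 0
    have key : ∀ ε > (0 : ℝ), ζ f ≤ m + ε := by
      intro ε hε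
      -- open set where f < m + ε
      have hU : IsOpen (f ⁻¹' Set.Iio (m + ε)) :=
        (isOpen_Iio).preimage f.continuous
      have hXU : X ⊆ f ⁻¹' Set.Iio (m + ε) := fun x hx =>
        lt_of_le_of_lt (hx0 hx) (lt_add_of_pos_right m hε)
      obtain ⟨g, hg1, hg0, hgc, hg01⟩ :=
        exists_continuous_one_zero_of_isCompact hX hU.isClosed_compl
          (Set.disjoint_compl_right_iff_subset.mpr hXU)
      -- h = f + g * ((m+ε) - f)
      set k : C(M, ℝ) := g * (ContinuousMap.const M (m + ε) - (f : C(M, ℝ))) with hk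
      have hkc : HasCompactSupport k := hgc.mul_right
      set h : C_c(M, ℝ) := f + ⟨k, hkc⟩ with hh
      have hhval : ∀ x : M, h x = f x + g x * ((m + ε) - f x) := fun x => rfl
      have hfh : ∀ x : M, f x - h x ≤ 0 := by
        intro x
        rw [hhval]
        have : 0 ≤ g x * ((m + ε) - f x) := by
          by_cases hx : x ∈ f ⁻¹' Set.Iio (m + ε)
          · exact mul_nonneg (hg01 x).1 (by simpa [sub_nonneg] using le_of_lt hx)
          · simp [hg0 hx]
        linarith
      have hhc : ∀ x ∈ X, h x = m + ε := by
        intro x hx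
        rw [hhval, hg1 hx]
        simp
      have h1 : ζ f - ζ h ≤ 0 :=
        le_trans (ha f h) (Real.iSup_le (fun x => hfh x) le_rfl)
      have h2 : ζ h = m + ε := hsh h (m + ε) hhc
      linarith
    by_contra hc
    push_neg at hc
    have := key ((ζ f - m) / 2) (by linarith)
    linarith
  · intro hle f c hfc
    have hsup : ∀ (g : C_c(M, ℝ)) (d : ℝ), (∀ x ∈ X, g x = d) → (⨆ x : X, g (x : M)) = d := by
      intro g d hg
      have : (fun x : X => g (x : M)) = fun _ : X => d := by
        funext x; exact hg x x.2
      rw [this, ciSup_const]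
    have h1 : ζ f ≤ c := by
      have := hle f
      rwa [hsup f c hfc] at this
    have h2 : ζ (-f) ≤ -c := by
      have := hle (-f)
      have hnc : ∀ x ∈ X, (-f) x = -c := by
        intro x hx
        simp [hfc x hx]
      rwa [hsup (-f) (-c) hnc] at this
    have := hb f
    linarith
end

section
/- Let M be a locally compact Hausdorff topological space and let C_c(M) denote the space of compactly supported continuous real-valued functions on M. Let ζ : C_c(M) → ℝ satisfy: (a) ζ(0) = 0 and ζ(f) − ζ(g) ≤ sup_{x∈M}(f(x) − g(x)) for all f, g ∈ C_c(M); (b) ζ(f + g) ≤ ζ(f) + ζ(g) whenever f, g ∈ C_c(M) have disjoint supports. Call a compact subset X ⊆ M ζ-superheavy if ζ(f) = c for every f ∈ C_c(M) and c ∈ ℝ with f(x) = c for all x ∈ X. Then any two nonempty compact ζ-superheavy subsets X, X' ⊆ M intersect: X ∩ X' ≠ ∅. -/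
open CompactlySupported

/-- Let `M` be a locally compact Hausdorff topological space and
`C_c(M, ℝ)` the space of compactly supported continuous real-valued functions on `M`.
Let `ζ : C_c(M, ℝ) → ℝ` satisfy: (a) `ζ 0 = 0` and `ζ f - ζ g ≤ sup_{x ∈ M} (f x - g x)`
for all `f g`; (b) `ζ (f + g) ≤ ζ f + ζ g` whenever `f, g` have disjoint supports.
Call a compact subset `X ⊆ M` superheavy if `ζ f = c` whenever `f` is constantly equal
to `c` on `X`. Then any two nonempty compact superheavy subsets `X, X' ⊆ M`
intersect. -/
theorem superheavy_intersect
    {M : Type*} [TopologicalSpace M] [LocallyCompactSpace M] [T2Space M]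
    (ζ : C_c(M, ℝ) → ℝ)
    (ha0 : ζ 0 = 0)
    (ha : ∀ f g : C_c(M, ℝ), ζ f - ζ g ≤ ⨆ x : M, (f x - g x))
    (hb : ∀ f g : C_c(M, ℝ), Disjoint (tsupport ⇑f) (tsupport ⇑g) →
      ζ (f + g) ≤ ζ f + ζ g)
    (X X' : Set M) (hX : IsCompact X) (hXne : X.Nonempty)
    (hX' : IsCompact X') (hX'ne : X'.Nonempty)
    (hXsh : ∀ (f : C_c(M, ℝ)) (c : ℝ), (∀ x ∈ X, f x = c) → ζ f = c)
    (hX'sh : ∀ (f : C_c(M, ℝ)) (c : ℝ), (∀ x ∈ X', f x = c) → ζ f = c) :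
    (X ∩ X').Nonempty := by
  by_contra hcon
  rw [Set.not_nonempty_iff_eq_empty] at hcon
  have hdisj : Disjoint X X' := Set.disjoint_iff_inter_eq_empty.mpr hcon
  -- separate by disjoint open sets
  obtain ⟨U, V, hU, hV, hXU, hX'V, hUV⟩ := SeparatedNhds.of_isCompact_isCompact hX hX' hdisj
  -- shrink to compact sets
  obtain ⟨K, hK, hXK, hKU⟩ := exists_compact_between hX hU hXU
  obtain ⟨K', hK', hX'K', hK'V⟩ := exists_compact_between hX' hV hX'V
  -- Urysohn functions
  obtain ⟨f₁, hf₁X, hf₁t, hf₁cs, hf₁i⟩ :=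
    exists_continuous_one_zero_of_isCompact hX (isOpen_interior (s := K)).isClosed_compl
      (Set.disjoint_compl_right_iff_subset.mpr hXK)
  obtain ⟨f₂, hf₂X, hf₂t, hf₂cs, hf₂i⟩ :=
    exists_continuous_one_zero_of_isCompact hX' (isOpen_interior (s := K')).isClosed_compl
      (Set.disjoint_compl_right_iff_subset.mpr hX'K')
  have hts1 : tsupport ⇑f₁ ⊆ K := by
    refine (closure_mono ?_).trans ((hK.isClosed.closure_subset_iff).mpr interior_subset)
    intro x hx
    by_contra hxK
    exact hx (hf₁t hxK)
  have hts2 : tsupport ⇑f₂ ⊆ K' := by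
    refine (closure_mono ?_).trans ((hK'.isClosed.closure_subset_iff).mpr interior_subset)
    intro x hx
    by_contra hxK
    exact hx (hf₂t hxK)
  set g : C_c(M, ℝ) := ⟨-f₁, HasCompactSupport.neg hf₁cs⟩ with hg
  set g' : C_c(M, ℝ) := ⟨-f₂, HasCompactSupport.neg hf₂cs⟩ with hg'
  have htg : tsupport ⇑g = tsupport ⇑f₁ := by
    simp [hg, tsupport, Function.support_neg]
  have htg' : tsupport ⇑g' = tsupport ⇑f₂ := by
    simp [hg', tsupport, Function.support_neg]
  have hd : Disjoint (tsupport ⇑g) (tsupport ⇑g') := by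
    rw [htg, htg']
    exact (hUV.mono hKU hK'V).mono hts1 hts2
  have hζg : ζ g = -1 := hXsh g (-1) (fun x hx => by simp [hg, hf₁X hx])
  have hζg' : ζ g' = -1 := hX'sh g' (-1) (fun x hx => by simp [hg', hf₂X hx])
  have h2 : ζ (g + g') ≤ -2 := by
    have := hb g g' hd; linarith
  have hne : Nonempty M := ⟨hXne.choose⟩
  have h1 : ζ 0 - ζ (g + g') ≤ 1 := by
    refine (ha 0 (g + g')).trans (ciSup_le fun x => ?_)
    have h0 : (0 : C_c(M, ℝ)) x = 0 := rfl
    have hsum : (g + g') x = g x + g' x := rfl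
    rw [h0, hsum]
    have hgx : ∀ y, g y = -(f₁ y) := fun y => rfl
    have hg'x : ∀ y, g' y = -(f₂ y) := fun y => rfl
    have hb1 : g x + g' x ≥ -1 := by
      by_cases hxs : x ∈ tsupport ⇑g
      · have hx2 : x ∉ tsupport ⇑g' := Set.disjoint_left.mp hd hxs
        have h0' : g' x = 0 := image_eq_zero_of_notMem_tsupport hx2
        have h1 := (hf₁i x).2
        rw [hgx, h0']
        linarith
      · have h0' : g x = 0 := image_eq_zero_of_notMem_tsupport hxs
        have h1 := (hf₂i x).2
        rw [hg'x, h0']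
        linarith
    linarith
  linarith [h1, h2, ha0]
end

section
/- Let 𝒱 = (V, v⃗, 𝒜, ∂) and 𝒱' = (V', v⃗', 𝒜', ∂') be filtered graded chain complexes over ℤ/2 in general position, meaning the function (v, v') ↦ 𝒜(v) + 𝒜'(v') on v⃗ × v⃗' is injective, and let 𝒱'' = 𝒱 ⊗ 𝒱' be their product. Then for every nonzero α ∈ H(V, ∂) and every nonzero α' ∈ H(V', ∂'), the class α ⊗ α' ∈ H(V'', ∂'') = H(V, ∂) ⊗ H(V', ∂') is nonzero and ℓ(α ⊗ α', 𝒱'') = ℓ(α, 𝒱) + ℓ(α', 𝒱'). -/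
/-- The spectral invariant `ℓ([z], 𝒱)` of the homology class represented by a cycle `z`
in a filtered chain complex over `ℤ/2` with (finite) basis `ι`, action `A : ι → ℝ` and
differential `d`: the infimum of the filtration levels `a` such that the class of `z` is
in the image of `H(V^{<a}) → H`, i.e. such that some cycle homologous to `z` is
supported on basis elements of action `< a`. -/
noncomputable def specInv {ι : Type*} [Fintype ι] (A : ι → ℝ)
    (d : (ι → ZMod 2) →ₗ[ZMod 2] (ι → ZMod 2)) (z : ι → ZMod 2) : ℝ :=
  sInf {a : ℝ | ∃ c : ι → ZMod 2, d c = 0 ∧ c - z ∈ LinearMap.range d ∧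
    ∀ i : ι, c i ≠ 0 → A i < a}


set_option linter.unusedSectionVars false

namespace SpecInvAux

/-- The subspace of vectors supported on actions `< a`. -/
def below {ι : Type*} (A : ι → ℝ) (a : ℝ) : Submodule (ZMod 2) (ι → ZMod 2) where
  carrier := {c | ∀ i, c i ≠ 0 → A i < a}
  add_mem' := by
    intro c c' hc hc' i hi
    by_cases h : c i = 0
    · exact hc' i (by simpa [h] using hi)
    · exact hc i h
  zero_mem' := by intro i hi; simp at hi
  smul_mem' := by
    intro r c hc i hi
    exact hc i fun h => hi (by simp [h])

/-- Separating functional. -/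
lemma exists_dual_one {K V : Type*} [Field K] [AddCommGroup V] [Module K V]
    {U : Submodule K V} {z : V} (hz : z ∉ U) :
    ∃ f : V →ₗ[K] K, f z = 1 ∧ ∀ u ∈ U, f u = 0 := by
  have hq : (U.mkQ z : V ⧸ U) ≠ 0 := by
    simpa [Submodule.Quotient.mk_eq_zero] using hz
  obtain ⟨g, hg⟩ := (LinearMap.toSpanSingleton K (V ⧸ U) (U.mkQ z)).exists_leftInverse_of_injective
      (LinearMap.ker_toSpanSingleton K hq)
  refine ⟨g ∘ₗ U.mkQ, ?_, fun u hu => ?_⟩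
  · have := LinearMap.congr_fun hg 1
    simpa [LinearMap.toSpanSingleton_apply_one] using this
  · simp [(Submodule.Quotient.mk_eq_zero U).mpr hu]

variable {ι : Type*} [Fintype ι] [DecidableEq ι]

/-- The set whose infimum is `specInv`. -/
def Sset (A : ι → ℝ) (d : (ι → ZMod 2) →ₗ[ZMod 2] (ι → ZMod 2)) (z : ι → ZMod 2) : Set ℝ :=
  {a : ℝ | ∃ c : ι → ZMod 2, d c = 0 ∧ c - z ∈ LinearMap.range d ∧
    ∀ i : ι, c i ≠ 0 → A i < a}

lemma specInv_eq (A : ι → ℝ) (d : (ι → ZMod 2) →ₗ[ZMod 2] (ι → ZMod 2)) (z : ι → ZMod 2) :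
    specInv A d z = sInf (Sset A d z) := rfl

lemma ne_zero_of_not_boundary {d : (ι → ZMod 2) →ₗ[ZMod 2] (ι → ZMod 2)} {z : ι → ZMod 2}
    (hznb : z ∉ LinearMap.range d) : z ≠ 0 := by
  rintro rfl; exact hznb ⟨0, by simp⟩

lemma nonempty_ι {z : ι → ZMod 2} (hz0 : z ≠ 0) : Nonempty ι := by
  obtain ⟨i, -⟩ := Function.ne_iff.mp hz0
  exact ⟨i⟩

lemma sset_nonempty {A : ι → ℝ} {d : (ι → ZMod 2) →ₗ[ZMod 2] (ι → ZMod 2)} {z : ι → ZMod 2}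
    (hz : d z = 0) (hz0 : z ≠ 0) : (Sset A d z).Nonempty := by
  haveI := nonempty_ι hz0
  refine ⟨Finset.univ.sup' Finset.univ_nonempty A + 1, z, hz, by simp, fun i _ => ?_⟩
  have := Finset.le_sup' A (Finset.mem_univ i)
  linarith

lemma sset_bddBelow {A : ι → ℝ} {d : (ι → ZMod 2) →ₗ[ZMod 2] (ι → ZMod 2)} {z : ι → ZMod 2}
    (hznb : z ∉ LinearMap.range d) : BddBelow (Sset A d z) := by
  haveI := nonempty_ι (ne_zero_of_not_boundary hznb)
  refine ⟨Finset.univ.inf' Finset.univ_nonempty A, ?_⟩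
  rintro a ⟨c, hc, hcz, hlt⟩
  have hc0 : c ≠ 0 := by
    rintro rfl
    exact hznb (by simpa using Submodule.neg_mem _ hcz)
  obtain ⟨i, hi⟩ := Function.ne_iff.mp hc0
  have h1 := Finset.inf'_le A (Finset.mem_univ i)
  have h2 := hlt i hi
  linarith

/-- The key point: `z` is not in `im d + V^{< ℓ(z)}`. -/
lemma not_mem_sup {A : ι → ℝ} {d : (ι → ZMod 2) →ₗ[ZMod 2] (ι → ZMod 2)} {z : ι → ZMod 2}
    (hd2 : ∀ c, d (d c) = 0) (hz : d z = 0) (hznb : z ∉ LinearMap.range d) :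
    z ∉ LinearMap.range d ⊔ below A (sInf (Sset A d z)) := by
  intro hmem
  rw [Submodule.mem_sup] at hmem
  obtain ⟨u, hu, v, hv, huv⟩ := hmem
  obtain ⟨b, rfl⟩ := hu
  have hdv : d v = 0 := by
    have : v = z - d b := by rw [← huv]; abel
    rw [this, map_sub, hz, hd2, sub_zero]
  have hvz : v - z ∈ LinearMap.range d := ⟨-b, by rw [map_neg]; rw [← huv]; abel⟩
  have hv0 : v ≠ 0 := by
    rintro rfl
    exact hznb ⟨b, by rw [← huv]; abel⟩
  obtain ⟨i₀, hi₀'⟩ := Function.ne_iff.mp hv0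
  have hi₀ : v i₀ ≠ 0 := by simpa using hi₀'
  set ℓ := sInf (Sset A d z) with hℓ
  have hsupp : (Finset.univ.filter (fun i => v i ≠ 0)).Nonempty :=
    ⟨i₀, by simp [hi₀]⟩
  set m := (Finset.univ.filter (fun i => v i ≠ 0)).sup' hsupp A with hm
  have hmℓ : m < ℓ := by
    rw [hm, Finset.sup'_lt_iff]
    intro i hi
    exact hv i (by simpa using hi)
  have hmem2 : (m + ℓ) / 2 ∈ Sset A d z := by
    refine ⟨v, hdv, hvz, fun i hi => ?_⟩
    have : A i ≤ m := Finset.le_sup' A (by simp [hi])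
    linarith
  have := csInf_le (sset_bddBelow hznb) hmem2
  rw [← hℓ] at this
  linarith

/-- The separating coefficient vector. -/
lemma exists_lambda {A : ι → ℝ} {d : (ι → ZMod 2) →ₗ[ZMod 2] (ι → ZMod 2)} {z : ι → ZMod 2}
    (hd2 : ∀ c, d (d c) = 0) (hz : d z = 0) (hznb : z ∉ LinearMap.range d) :
    ∃ lam : ι → ZMod 2, (∑ i, lam i * z i) = 1 ∧
      (∀ b : ι → ZMod 2, ∑ i, lam i * d b i = 0) ∧
      (∀ i, A i < sInf (Sset A d z) → lam i = 0) := by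
  obtain ⟨f, hfz, hfU⟩ := exists_dual_one (not_mem_sup hd2 hz hznb)
  have hexp : ∀ c : ι → ZMod 2, ∑ i, f (fun j => if i = j then 1 else 0) * c i = f c := by
    intro c
    rw [LinearMap.pi_apply_eq_sum_univ f c]
    exact Finset.sum_congr rfl fun i _ => by rw [smul_eq_mul, mul_comm]
  refine ⟨fun i => f (fun j => if i = j then 1 else 0), by rw [hexp]; exact hfz,
    fun b => ?_, fun i hi => ?_⟩
  · rw [hexp]
    exact hfU (d b) (Submodule.mem_sup_left ⟨b, rfl⟩)
  · refine hfU _ (Submodule.mem_sup_right ?_)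
    intro j hj
    have : j = i := by by_contra h; simp [Ne.symm h] at hj
    rwa [this]

end SpecInvAux

namespace SpecInvAux

variable {ι ι' : Type*} [Fintype ι] [Fintype ι'] [DecidableEq ι] [DecidableEq ι']

/-- The slice map `G(W) j = ∑ i, λ i * W (i, j)` is a chain map, provided `λ`
annihilates the image of `d`. -/
lemma G_chain (lam : ι → ZMod 2)
    (d : (ι → ZMod 2) →ₗ[ZMod 2] (ι → ZMod 2))
    (d' : (ι' → ZMod 2) →ₗ[ZMod 2] (ι' → ZMod 2))
    (d'' : (ι × ι' → ZMod 2) →ₗ[ZMod 2] (ι × ι' → ZMod 2))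
    (hd'' : ∀ (c : ι × ι' → ZMod 2) (p : ι × ι'),
      d'' c p = d (fun i => c (i, p.2)) p.1 + d' (fun j => c (p.1, j)) p.2)
    (hvan : ∀ b : ι → ZMod 2, ∑ i, lam i * d b i = 0)
    (W : ι × ι' → ZMod 2) :
    (fun j => ∑ i, lam i * d'' W (i, j)) = d' (fun j => ∑ i, lam i * W (i, j)) := by
  funext j
  have h1 : (fun j' => ∑ i, lam i * W (i, j')) = ∑ i, lam i • (fun j' => W (i, j')) := by
    funext j'
    rw [Finset.sum_apply]
    exact Finset.sum_congr rfl fun i _ => by simp [smul_eq_mul]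
  calc ∑ i, lam i * d'' W (i, j)
      = ∑ i, (lam i * d (fun i' => W (i', j)) i + lam i * d' (fun j' => W (i, j')) j) := by
        refine Finset.sum_congr rfl fun i _ => ?_
        rw [hd'' W (i, j), mul_add]
    _ = ∑ i, lam i * d (fun i' => W (i', j)) i + ∑ i, lam i * d' (fun j' => W (i, j')) j :=
        Finset.sum_add_distrib
    _ = ∑ i, lam i * d' (fun j' => W (i, j')) j := by
        rw [hvan (fun i' => W (i', j)), zero_add]
    _ = d' (fun j' => ∑ i, lam i * W (i, j')) j := by
        rw [h1, map_sum, Finset.sum_apply]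
        exact Finset.sum_congr rfl fun i _ => by rw [map_smul]; simp [smul_eq_mul]

/-- Tensor of a chain/cycle: `d''(c ⊗ c') = 0` when `d c = 0` and `d' c' = 0`. -/
lemma tensor_cycle
    (d : (ι → ZMod 2) →ₗ[ZMod 2] (ι → ZMod 2))
    (d' : (ι' → ZMod 2) →ₗ[ZMod 2] (ι' → ZMod 2))
    (d'' : (ι × ι' → ZMod 2) →ₗ[ZMod 2] (ι × ι' → ZMod 2))
    (hd'' : ∀ (c : ι × ι' → ZMod 2) (p : ι × ι'),
      d'' c p = d (fun i => c (i, p.2)) p.1 + d' (fun j => c (p.1, j)) p.2)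
    {c : ι → ZMod 2} {c' : ι' → ZMod 2} (hc : d c = 0) (hc' : d' c' = 0) :
    d'' (fun p => c p.1 * c' p.2) = 0 := by
  funext p
  rw [hd'']
  have e1 : (fun i => c i * c' p.2) = c' p.2 • c := by
    funext i; simp [smul_eq_mul, mul_comm]
  have e2 : (fun j => c p.1 * c' j) = c p.1 • c' := by
    funext j; simp [smul_eq_mul]
  rw [e1, e2, map_smul, map_smul, hc, hc']
  simp

end SpecInvAux

namespace SpecInvAux

variable {ι ι' : Type*} [Fintype ι] [Fintype ι'] [DecidableEq ι] [DecidableEq ι']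

/-- `c ⊗ c'` is homologous to `z ⊗ z'` when `c ~ z`, `c' ~ z'`. -/
lemma tensor_homologous
    (d : (ι → ZMod 2) →ₗ[ZMod 2] (ι → ZMod 2))
    (d' : (ι' → ZMod 2) →ₗ[ZMod 2] (ι' → ZMod 2))
    (d'' : (ι × ι' → ZMod 2) →ₗ[ZMod 2] (ι × ι' → ZMod 2))
    (hd'' : ∀ (c : ι × ι' → ZMod 2) (p : ι × ι'),
      d'' c p = d (fun i => c (i, p.2)) p.1 + d' (fun j => c (p.1, j)) p.2)
    {z c : ι → ZMod 2} {z' c' : ι' → ZMod 2} {b : ι → ZMod 2} {b' : ι' → ZMod 2}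
    (hz : d z = 0) (hc' : d' c' = 0) (hb : d b = c - z) (hb' : d' b' = c' - z') :
    d'' (fun p => b p.1 * c' p.2 + z p.1 * b' p.2)
      = (fun p : ι × ι' => c p.1 * c' p.2) - (fun p : ι × ι' => z p.1 * z' p.2) := by
  funext p
  rw [hd'']
  have e1 : (fun i => b i * c' p.2 + z i * b' p.2) = c' p.2 • b + b' p.2 • z := by
    funext i; simp [smul_eq_mul]; ring
  have e2 : (fun j => b p.1 * c' j + z p.1 * b' j) = b p.1 • c' + z p.1 • b' := by
    funext j; simp [smul_eq_mul]
  rw [e1, e2, map_add, map_add, map_smul, map_smul, map_smul, map_smul, hz, hb, hc', hb']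
  simp only [Pi.add_apply, Pi.smul_apply, Pi.sub_apply, Pi.zero_apply, smul_eq_mul,
    smul_zero, Pi.smul_apply]
  ring

end SpecInvAux


open SpecInvAux

/-- Let `𝒱 = (V, v⃗, 𝒜, ∂)` and `𝒱' = (V', v⃗', 𝒜', ∂')` be filtered
graded chain complexes over `ℤ/2` in general position (the action
`(i, j) ↦ A i + A' j` on the product basis is injective), and let
`𝒱'' = 𝒱 ⊗ 𝒱'` be their product, with differential
`∂'' = ∂ ⊗ id + id ⊗ ∂'` (encoded pointwise on `ι × ι' → ZMod 2`). Let `α, α'` be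
nonzero homology classes of `𝒱, 𝒱'`, represented by the cycles `z, z'` which are not
boundaries. Then the class `α ⊗ α'`, represented by the cycle
`z ⊗ z' : (i, j) ↦ z i * z' j`, is nonzero, and
`ℓ(α ⊗ α', 𝒱'') = ℓ(α, 𝒱) + ℓ(α', 𝒱')`. -/
theorem specInv_product {ι ι' : Type*} [Fintype ι] [Fintype ι']
    [DecidableEq ι] [DecidableEq ι']
    (deg : ι → ℤ) (A : ι → ℝ) (hA : Function.Injective A)
    (d : (ι → ZMod 2) →ₗ[ZMod 2] (ι → ZMod 2))
    (hd2 : ∀ c : ι → ZMod 2, d (d c) = 0)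
    (hdeg : ∀ i j : ι, d (Pi.single i 1) j ≠ 0 → deg j = deg i - 1)
    (hfilt : ∀ (a : ℝ) (c : ι → ZMod 2), (∀ i : ι, c i ≠ 0 → A i < a) →
      ∀ j : ι, d c j ≠ 0 → A j < a)
    (deg' : ι' → ℤ) (A' : ι' → ℝ) (hA' : Function.Injective A')
    (d' : (ι' → ZMod 2) →ₗ[ZMod 2] (ι' → ZMod 2))
    (hd2' : ∀ c : ι' → ZMod 2, d' (d' c) = 0)
    (hdeg' : ∀ i j : ι', d' (Pi.single i 1) j ≠ 0 → deg' j = deg' i - 1)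
    (hfilt' : ∀ (a : ℝ) (c : ι' → ZMod 2), (∀ i : ι', c i ≠ 0 → A' i < a) →
      ∀ j : ι', d' c j ≠ 0 → A' j < a)
    (hgen : Function.Injective (fun p : ι × ι' => A p.1 + A' p.2))
    (d'' : (ι × ι' → ZMod 2) →ₗ[ZMod 2] (ι × ι' → ZMod 2))
    (hd'' : ∀ (c : ι × ι' → ZMod 2) (p : ι × ι'),
      d'' c p = d (fun i => c (i, p.2)) p.1 + d' (fun j => c (p.1, j)) p.2)
    (z : ι → ZMod 2) (hz : d z = 0) (hznb : z ∉ LinearMap.range d)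
    (z' : ι' → ZMod 2) (hz' : d' z' = 0) (hz'nb : z' ∉ LinearMap.range d') :
    (fun p : ι × ι' => z p.1 * z' p.2) ∉ LinearMap.range d'' ∧
    specInv (fun p : ι × ι' => A p.1 + A' p.2) d'' (fun p : ι × ι' => z p.1 * z' p.2) =
      specInv A d z + specInv A' d' z' := by
  set A'' : ι × ι' → ℝ := fun p => A p.1 + A' p.2 with hA''def
  set zz : ι × ι' → ZMod 2 := fun p => z p.1 * z' p.2 with hzzdef
  set ℓ := sInf (Sset A d z) with hℓdef
  set ℓ' := sInf (Sset A' d' z') with hℓ'def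
  -- the separating functional for `z`
  obtain ⟨lam, hlam1, hlamvan, hlamlow⟩ := exists_lambda hd2 hz hznb
  -- applying the slice map to `zz` gives `z'`
  have hGzz : ∀ j, ∑ i, lam i * zz (i, j) = z' j := by
    intro j
    have : ∑ i, lam i * (z i * z' j) = (∑ i, lam i * z i) * z' j := by
      rw [Finset.sum_mul]
      exact Finset.sum_congr rfl fun i _ => (mul_assoc _ _ _).symm
    simpa [hzzdef, hlam1] using this
  -- Part 1: `zz` is not a boundary.
  have hzznb : zz ∉ LinearMap.range d'' := by
    rintro ⟨W, hW⟩
    apply hz'nb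
    refine ⟨fun j => ∑ i, lam i * W (i, j), ?_⟩
    rw [← G_chain lam d d' d'' hd'' hlamvan W]
    funext j
    rw [hW]
    exact hGzz j
  refine ⟨hzznb, ?_⟩
  -- basic facts about the three S-sets
  have hz0 := ne_zero_of_not_boundary hznb
  have hz'0 := ne_zero_of_not_boundary hz'nb
  have hzz0 := ne_zero_of_not_boundary hzznb
  have hzzcyc : d'' zz = 0 := tensor_cycle d d' d'' hd'' hz hz'
  have hSne := sset_nonempty (A := A) hz hz0
  have hS'ne := sset_nonempty (A := A') hz' hz'0
  have hS''ne := sset_nonempty (A := A'') hzzcyc hzz0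
  have hSbdd := sset_bddBelow (A := A) hznb
  have hS'bdd := sset_bddBelow (A := A') hz'nb
  have hS''bdd := sset_bddBelow (A := A'') hzznb
  rw [specInv_eq, specInv_eq, specInv_eq, ← hℓdef, ← hℓ'def]
  refine le_antisymm ?_ ?_
  · -- upper bound
    by_contra hcon
    push_neg at hcon
    set a := (ℓ + ℓ' + sInf (Sset A'' d'' zz)) / 2 with hadef
    have ha1 : ℓ + ℓ' < a := by rw [hadef]; linarith
    have ha2 : a < sInf (Sset A'' d'' zz) := by rw [hadef]; linarith
    set ε := (a - ℓ - ℓ') / 2 with hεdef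
    have hε : 0 < ε := by rw [hεdef]; linarith
    obtain ⟨a₁, ha₁S, ha₁⟩ := (csInf_lt_iff hSbdd hSne).mp (by linarith : sInf (Sset A d z) < ℓ + ε)
    obtain ⟨a₂, ha₂S, ha₂⟩ := (csInf_lt_iff hS'bdd hS'ne).mp (by linarith : sInf (Sset A' d' z') < ℓ' + ε)
    obtain ⟨c, hc, ⟨b, hb⟩, hcsupp⟩ := ha₁S
    obtain ⟨c', hc', ⟨b', hb'⟩, hc'supp⟩ := ha₂S
    have hmem : a ∈ Sset A'' d'' zz := by
      refine ⟨fun p => c p.1 * c' p.2, tensor_cycle d d' d'' hd'' hc hc', ?_, ?_⟩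
      · exact ⟨fun p => b p.1 * c' p.2 + z p.1 * b' p.2,
          tensor_homologous d d' d'' hd'' hz hc' hb hb'⟩
      · intro p hp
        have h1 : c p.1 ≠ 0 := fun h => hp (by simp [h])
        have h2 : c' p.2 ≠ 0 := fun h => hp (by simp [h])
        have := hcsupp p.1 h1
        have := hc'supp p.2 h2
        rw [hεdef] at ha₁ ha₂
        show A p.1 + A' p.2 < a
        linarith
    have := csInf_le hS''bdd hmem
    linarith
  · -- lower bound
    refine le_csInf hS''ne ?_
    rintro a ⟨C, hC, ⟨W, hW⟩, hCsupp⟩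
    -- the slice GC is a cycle homologous to z'
    set GC : ι' → ZMod 2 := fun j => ∑ i, lam i * C (i, j) with hGCdef
    have hGCcyc : d' GC = 0 := by
      rw [hGCdef, ← G_chain lam d d' d'' hd'' hlamvan C]
      funext j
      rw [hC]
      simp
    have hGCz' : GC - z' = d' (fun j => ∑ i, lam i * W (i, j)) := by
      rw [← G_chain lam d d' d'' hd'' hlamvan W]
      funext j
      rw [hW]
      simp only [Pi.sub_apply, hGCdef]
      rw [← hGzz j, ← Finset.sum_sub_distrib]
      exact Finset.sum_congr rfl fun i _ => by ring
    -- GC must have support of action ≥ ℓ'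
    have hkey' := not_mem_sup (A := A') hd2' hz' hz'nb
    have : ∃ j, GC j ≠ 0 ∧ ℓ' ≤ A' j := by
      by_contra hcon
      push_neg at hcon
      apply hkey'
      rw [Submodule.mem_sup]
      refine ⟨-(d' (fun j => ∑ i, lam i * W (i, j))), Submodule.neg_mem _ ⟨_, rfl⟩, GC, ?_, ?_⟩
      · intro j hj
        exact hcon j hj
      · rw [← hGCz']; abel
    obtain ⟨j₀, hj₀, hj₀ℓ⟩ := this
    obtain ⟨i₀, -, hi₀⟩ := Finset.exists_ne_zero_of_sum_ne_zero hj₀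
    have hi₀lam : lam i₀ ≠ 0 := fun h => hi₀ (by rw [h, zero_mul])
    have hi₀C : C (i₀, j₀) ≠ 0 := fun h => hi₀ (by rw [h, mul_zero])
    have hi₀ℓ : ℓ ≤ A i₀ := by
      by_contra h
      exact hi₀lam (hlamlow i₀ (by rw [← hℓdef]; linarith))
    have := hCsupp (i₀, j₀) hi₀C
    have hAA : A'' (i₀, j₀) = A i₀ + A' j₀ := rfl
    rw [hAA] at this
    linarith
end
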